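/- Let K ≥ 1, α ≥ 0, let C ⊆ ℝ^m be a convex set, and for each k ∈ {1,…,K} let f_k : C → ℝ be a concave function such that 0 < f_k(z) and α·f_k(z) ≤ 1 for all z ∈ C. Define H_α(x) = (∑_{j=1}^K x_j e^{-α x_j}) / (∑_{i=1}^K e^{-α x_i}) for x ∈ ℝ^K with all x_i > 0. Then the function z ↦ H_α(f_1(z), …, f_K(z)) is concave on C. -/

import Mathlib

open Finset Real

namespace Stmt11Aux

variable {K : ℕ}

noncomputable def uf (y d : Fin K → ℝ) (k : Fin K) (t : ℝ) : ℝ := y k + t * d k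
noncomputable def sf (α : ℝ) (y d : Fin K → ℝ) (k : Fin K) (t : ℝ) : ℝ :=
  Real.exp (-α * uf y d k t)
noncomputable def Zf (α : ℝ) (y d : Fin K → ℝ) (t : ℝ) : ℝ := ∑ k, sf α y d k t
noncomputable def Nf (α : ℝ) (y d : Fin K → ℝ) (t : ℝ) : ℝ := ∑ k, uf y d k t * sf α y d k t
noncomputable def Z1 (α : ℝ) (y d : Fin K → ℝ) (t : ℝ) : ℝ := ∑ k, -(α * d k) * sf α y d k t
noncomputable def N1 (α : ℝ) (y d : Fin K → ℝ) (t : ℝ) : ℝ :=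
  ∑ k, d k * (1 - α * uf y d k t) * sf α y d k t
noncomputable def Z2 (α : ℝ) (y d : Fin K → ℝ) (t : ℝ) : ℝ :=
  ∑ k, α ^ 2 * d k ^ 2 * sf α y d k t
noncomputable def N2 (α : ℝ) (y d : Fin K → ℝ) (t : ℝ) : ℝ :=
  ∑ k, -(α * d k ^ 2 * (2 - α * uf y d k t)) * sf α y d k t
noncomputable def psi (α : ℝ) (y d : Fin K → ℝ) (t : ℝ) : ℝ := Nf α y d t / Zf α y d t
noncomputable def psi1 (α : ℝ) (y d : Fin K → ℝ) (t : ℝ) : ℝ :=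
  (N1 α y d t * Zf α y d t - Nf α y d t * Z1 α y d t) / Zf α y d t ^ 2
noncomputable def psi2 (α : ℝ) (y d : Fin K → ℝ) (t : ℝ) : ℝ :=
  ((N2 α y d t * Zf α y d t - Nf α y d t * Z2 α y d t) * Zf α y d t
    - 2 * Z1 α y d t * (N1 α y d t * Zf α y d t - Nf α y d t * Z1 α y d t)) / Zf α y d t ^ 3
noncomputable def Gt (α : ℝ) (y d : Fin K → ℝ) (t : ℝ) (k : Fin K) : ℝ :=
  (1 - α * uf y d k t) * Zf α y d t + α * Nf α y d t

variable (α : ℝ) (y d : Fin K → ℝ)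

lemma hasDerivAt_uf (k : Fin K) (t : ℝ) : HasDerivAt (uf y d k) (d k) t := by
  exact (((hasDerivAt_id t).mul_const (d k)).const_add (y k)).congr_deriv (by simp)

lemma hasDerivAt_sf (k : Fin K) (t : ℝ) :
    HasDerivAt (sf α y d k) (-(α * d k) * sf α y d k t) t := by
  have h1 : HasDerivAt (fun t => -α * uf y d k t) (-α * d k) t :=
    (hasDerivAt_uf y d k t).const_mul (-α)
  have h2 := h1.exp
  unfold sf
  convert h2 using 1
  ring

lemma hasDerivAt_Zf (t : ℝ) : HasDerivAt (Zf α y d) (Z1 α y d t) t := by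
  unfold Zf Z1
  exact HasDerivAt.fun_sum fun k _ => hasDerivAt_sf α y d k t

lemma hasDerivAt_Nf (t : ℝ) : HasDerivAt (Nf α y d) (N1 α y d t) t := by
  unfold Nf N1
  refine HasDerivAt.fun_sum fun k _ => ?_
  have := (hasDerivAt_uf y d k t).fun_mul (hasDerivAt_sf α y d k t)
  exact this.congr_deriv (by ring)

lemma hasDerivAt_Z1 (t : ℝ) : HasDerivAt (Z1 α y d) (Z2 α y d t) t := by
  unfold Z1 Z2
  refine HasDerivAt.fun_sum fun k _ => ?_
  have := (hasDerivAt_sf α y d k t).const_mul (-(α * d k))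
  exact this.congr_deriv (by ring)

lemma hasDerivAt_N1 (t : ℝ) : HasDerivAt (N1 α y d) (N2 α y d t) t := by
  unfold N1 N2
  refine HasDerivAt.fun_sum fun k _ => ?_
  have h1 : HasDerivAt (fun t => d k * (1 - α * uf y d k t)) (d k * -(α * d k)) t := by
    exact (((hasDerivAt_uf y d k t).const_mul α).const_sub 1).const_mul (d k)
  have := h1.fun_mul (hasDerivAt_sf α y d k t)
  exact this.congr_deriv (by unfold sf; ring)

lemma Zf_pos [NeZero K] (t : ℝ) : 0 < Zf α y d t := by
  haveI : Nonempty (Fin K) := ⟨⟨0, Nat.pos_of_ne_zero (NeZero.ne K)⟩⟩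
  exact Finset.sum_pos (fun k _ => Real.exp_pos _) Finset.univ_nonempty

lemma hasDerivAt_psi [NeZero K] (t : ℝ) : HasDerivAt (psi α y d) (psi1 α y d t) t := by
  unfold psi psi1
  exact (hasDerivAt_Nf α y d t).div (hasDerivAt_Zf α y d t) (Zf_pos α y d t).ne'

lemma deriv_psi [NeZero K] : deriv (psi α y d) = psi1 α y d :=
  funext fun t => (hasDerivAt_psi α y d t).deriv

lemma hasDerivAt_psi1 [NeZero K] (t : ℝ) : HasDerivAt (psi1 α y d) (psi2 α y d t) t := by
  have hz := (Zf_pos α y d t).ne'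
  have hA : HasDerivAt (fun t => N1 α y d t * Zf α y d t - Nf α y d t * Z1 α y d t)
      (N2 α y d t * Zf α y d t - Nf α y d t * Z2 α y d t) t := by
    have := ((hasDerivAt_N1 α y d t).fun_mul (hasDerivAt_Zf α y d t)).fun_sub
      ((hasDerivAt_Nf α y d t).fun_mul (hasDerivAt_Z1 α y d t))
    exact this.congr_deriv (by ring)
  have hB : HasDerivAt (fun t => Zf α y d t ^ 2) (2 * Zf α y d t ^ 1 * Z1 α y d t) t :=
    (hasDerivAt_Zf α y d t).pow 2
  have h := hA.fun_div hB (pow_ne_zero 2 hz)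
  unfold psi1 psi2
  refine h.congr_deriv ?_
  field_simp

lemma deriv2_psi [NeZero K] (t : ℝ) : deriv^[2] (psi α y d) t = psi2 α y d t := by
  show deriv (deriv (psi α y d)) t = _
  rw [deriv_psi]
  exact (hasDerivAt_psi1 α y d t).deriv

/-- Core Cauchy–Schwarz style inequality. -/
lemma core (s g dd : Fin K → ℝ) (hs : ∀ k, 0 ≤ s k) (hg : ∀ k, 0 ≤ g k)
    (hZ : 0 < ∑ k, s k) (hsg : ∑ k, s k * g k = (∑ k, s k) ^ 2) :
    2 * (∑ k, dd k * s k) * (∑ k, dd k * s k * g k) ≤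
      (∑ k, s k) ^ 2 * (∑ k, dd k ^ 2 * s k) + (∑ k, s k) * (∑ k, dd k ^ 2 * s k * g k) := by
  set Z := ∑ k, s k with hZdef
  set A := ∑ k, dd k * s k with hA
  set B := ∑ k, dd k * s k * g k with hB
  set Cc := ∑ k, dd k ^ 2 * s k with hCc
  set Dg := ∑ k, dd k ^ 2 * s k * g k with hDg
  have cauchy1 : A ^ 2 ≤ Z * Cc := by
    have h := Finset.sum_mul_sq_le_sq_mul_sq Finset.univ (fun k => Real.sqrt (s k))
      (fun k => dd k * Real.sqrt (s k))
    have e1 : ∑ k, Real.sqrt (s k) * (dd k * Real.sqrt (s k)) = A := by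
      refine Finset.sum_congr rfl fun k _ => ?_
      calc Real.sqrt (s k) * (dd k * Real.sqrt (s k))
          = dd k * (Real.sqrt (s k) * Real.sqrt (s k)) := by ring
        _ = dd k * s k := by rw [Real.mul_self_sqrt (hs k)]
    have e2 : ∑ k, (Real.sqrt (s k)) ^ 2 = Z := by
      refine Finset.sum_congr rfl fun k _ => ?_
      exact Real.sq_sqrt (hs k)
    have e3 : ∑ k, (dd k * Real.sqrt (s k)) ^ 2 = Cc := by
      refine Finset.sum_congr rfl fun k _ => ?_
      rw [mul_pow, Real.sq_sqrt (hs k)]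
    rw [e1, e2, e3] at h
    exact h
  have cauchy2 : B ^ 2 ≤ Z ^ 2 * Dg := by
    have h := Finset.sum_mul_sq_le_sq_mul_sq Finset.univ (fun k => Real.sqrt (s k * g k))
      (fun k => dd k * Real.sqrt (s k * g k))
    have hsgk : ∀ k, 0 ≤ s k * g k := fun k => mul_nonneg (hs k) (hg k)
    have e1 : ∑ k, Real.sqrt (s k * g k) * (dd k * Real.sqrt (s k * g k)) = B := by
      refine Finset.sum_congr rfl fun k _ => ?_
      calc Real.sqrt (s k * g k) * (dd k * Real.sqrt (s k * g k))
          = dd k * (Real.sqrt (s k * g k) * Real.sqrt (s k * g k)) := by ring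
        _ = dd k * (s k * g k) := by rw [Real.mul_self_sqrt (hsgk k)]
        _ = dd k * s k * g k := by ring
    have e2 : ∑ k, (Real.sqrt (s k * g k)) ^ 2 = Z ^ 2 := by
      rw [← hsg]
      refine Finset.sum_congr rfl fun k _ => ?_
      exact Real.sq_sqrt (hsgk k)
    have e3 : ∑ k, (dd k * Real.sqrt (s k * g k)) ^ 2 = Dg := by
      refine Finset.sum_congr rfl fun k _ => ?_
      rw [mul_pow, Real.sq_sqrt (hsgk k)]
      ring
    rw [e1, e2, e3] at h
    exact h
  have h1 : 2 * A * B * Z ≤ Z ^ 2 * A ^ 2 + B ^ 2 := by nlinarith [sq_nonneg (Z * A - B)]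
  have h2 : Z ^ 2 * A ^ 2 ≤ Z ^ 2 * (Z * Cc) := by nlinarith [sq_nonneg Z]
  have h3 : (2 * A * B) * Z ≤ (Z ^ 2 * Cc + Z * Dg) * Z := by nlinarith
  exact le_of_mul_le_mul_right h3 hZ


lemma I1 (t : ℝ) :
    N1 α y d t * Zf α y d t - Nf α y d t * Z1 α y d t
      = ∑ k, d k * sf α y d k t * Gt α y d t k := by
  have : N1 α y d t * Zf α y d t - Nf α y d t * Z1 α y d t
      = ∑ k, (d k * (1 - α * uf y d k t) * sf α y d k t * Zf α y d t
          - Nf α y d t * (-(α * d k) * sf α y d k t)) := by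
    rw [Finset.sum_sub_distrib, ← Finset.sum_mul, ← Finset.mul_sum]
    rfl
  rw [this]
  refine Finset.sum_congr rfl fun k _ => ?_
  unfold Gt
  ring

lemma I2 (t : ℝ) :
    N2 α y d t * Zf α y d t - Nf α y d t * Z2 α y d t
      = -α * ∑ k, d k ^ 2 * sf α y d k t * (Zf α y d t + Gt α y d t k) := by
  have : N2 α y d t * Zf α y d t - Nf α y d t * Z2 α y d t
      = ∑ k, (-(α * d k ^ 2 * (2 - α * uf y d k t)) * sf α y d k t * Zf α y d t
          - Nf α y d t * (α ^ 2 * d k ^ 2 * sf α y d k t)) := by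
    rw [Finset.sum_sub_distrib, ← Finset.sum_mul, ← Finset.mul_sum]
    rfl
  rw [this, Finset.mul_sum]
  refine Finset.sum_congr rfl fun k _ => ?_
  unfold Gt
  ring

lemma I3 (t : ℝ) : ∑ k, sf α y d k t * Gt α y d t k = Zf α y d t ^ 2 := by
  have : ∑ k, sf α y d k t * Gt α y d t k
      = ∑ k, (sf α y d k t * Zf α y d t - uf y d k t * sf α y d k t * (α * Zf α y d t)
          + sf α y d k t * (α * Nf α y d t)) := by
    refine Finset.sum_congr rfl fun k _ => ?_
    unfold Gt
    ring
  rw [this, Finset.sum_add_distrib, Finset.sum_sub_distrib, ← Finset.sum_mul, ← Finset.sum_mul,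
    ← Finset.sum_mul]
  show Zf α y d t * Zf α y d t - Nf α y d t * (α * Zf α y d t) + Zf α y d t * (α * Nf α y d t)
      = Zf α y d t ^ 2
  ring

lemma I4 (t : ℝ) : Z1 α y d t = -α * ∑ k, d k * sf α y d k t := by
  unfold Z1
  rw [Finset.mul_sum]
  refine Finset.sum_congr rfl fun k _ => ?_
  ring

lemma Nf_pos [NeZero K] (t : ℝ) (hb : ∀ k, 0 < uf y d k t) : 0 < Nf α y d t := by
  haveI : Nonempty (Fin K) := ⟨⟨0, Nat.pos_of_ne_zero (NeZero.ne K)⟩⟩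
  exact Finset.sum_pos (fun k _ => mul_pos (hb k) (Real.exp_pos _)) Finset.univ_nonempty

lemma Gt_nonneg [NeZero K] (hα : 0 ≤ α) (t : ℝ) (hb : ∀ k, 0 < uf y d k t)
    (hb2 : ∀ k, α * uf y d k t ≤ 1) (k : Fin K) : 0 ≤ Gt α y d t k := by
  unfold Gt
  have h1 : 0 ≤ 1 - α * uf y d k t := by linarith [hb2 k]
  exact add_nonneg (mul_nonneg h1 (Zf_pos α y d t).le)
    (mul_nonneg hα (Nf_pos α y d t hb).le)

lemma psi1_nonneg [NeZero K] (hα : 0 ≤ α) (t : ℝ) (hb : ∀ k, 0 < uf y d k t)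
    (hb2 : ∀ k, α * uf y d k t ≤ 1) (hd : ∀ k, 0 ≤ d k) : 0 ≤ psi1 α y d t := by
  unfold psi1
  apply div_nonneg _ (by positivity)
  rw [I1]
  exact Finset.sum_nonneg fun k _ => mul_nonneg
    (mul_nonneg (hd k) (Real.exp_pos _).le) (Gt_nonneg α y d hα t hb hb2 k)

lemma psi2_nonpos [NeZero K] (hα : 0 ≤ α) (t : ℝ) (hb : ∀ k, 0 < uf y d k t)
    (hb2 : ∀ k, α * uf y d k t ≤ 1) : psi2 α y d t ≤ 0 := by
  unfold psi2
  apply div_nonpos_of_nonpos_of_nonneg _ (pow_nonneg (Zf_pos α y d t).le 3)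
  rw [I1, I2, I4]
  have hZeq : Zf α y d t = ∑ k, sf α y d k t := rfl
  have hcore := core (fun k => sf α y d k t) (Gt α y d t) d
    (fun k => (Real.exp_pos _).le) (Gt_nonneg α y d hα t hb hb2)
    (by rw [← hZeq]; exact Zf_pos α y d t) (by rw [← hZeq]; exact I3 α y d t)
  rw [← hZeq] at hcore
  beta_reduce at hcore
  have hexp : ∑ k, d k ^ 2 * sf α y d k t * (Zf α y d t + Gt α y d t k)
      = (∑ k, d k ^ 2 * sf α y d k t) * Zf α y d t
        + ∑ k, d k ^ 2 * sf α y d k t * Gt α y d t k := by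
    rw [Finset.sum_mul, ← Finset.sum_add_distrib]
    refine Finset.sum_congr rfl fun k _ => ?_
    ring
  rw [hexp]
  nlinarith [mul_nonneg hα (sub_nonneg.2 hcore)]

lemma box_interp (hα : 0 ≤ α) (h0 : ∀ k, 0 < y k ∧ α * y k ≤ 1)
    (h1 : ∀ k, 0 < y k + d k ∧ α * (y k + d k) ≤ 1) {t : ℝ} (ht0 : 0 ≤ t) (ht1 : t ≤ 1) :
    (∀ k, 0 < uf y d k t) ∧ (∀ k, α * uf y d k t ≤ 1) := by
  constructor
  · intro k
    show 0 < y k + t * d k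
    nlinarith [(h0 k).1, (h1 k).1, mul_nonneg ht0 (h1 k).1.le,
      mul_nonneg (sub_nonneg.2 ht1) (h0 k).1.le, mul_pos (h0 k).1 (h1 k).1]
  · intro k
    show α * (y k + t * d k) ≤ 1
    have a1 : (1 - t) * (α * y k) ≤ (1 - t) * 1 :=
      mul_le_mul_of_nonneg_left (h0 k).2 (by linarith)
    have a2 : t * (α * (y k + d k)) ≤ t * 1 :=
      mul_le_mul_of_nonneg_left (h1 k).2 ht0
    nlinarith [a1, a2]

lemma psi_concaveOn [NeZero K] (hα : 0 ≤ α) (h0 : ∀ k, 0 < y k ∧ α * y k ≤ 1)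
    (h1 : ∀ k, 0 < y k + d k ∧ α * (y k + d k) ≤ 1) :
    ConcaveOn ℝ (Set.Icc (0 : ℝ) 1) (psi α y d) := by
  apply concaveOn_of_deriv2_nonpos (convex_Icc 0 1)
  · exact fun t _ => (hasDerivAt_psi α y d t).continuousAt.continuousWithinAt
  · exact fun t _ => (hasDerivAt_psi α y d t).differentiableAt.differentiableWithinAt
  · rw [deriv_psi]
    exact fun t _ => (hasDerivAt_psi1 α y d t).differentiableAt.differentiableWithinAt
  · intro t ht
    rw [interior_Icc] at ht
    rw [deriv2_psi]
    have hb := box_interp α y d hα h0 h1 ht.1.le ht.2.le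
    exact psi2_nonpos α y d hα t hb.1 hb.2

lemma psi_monotoneOn [NeZero K] (hα : 0 ≤ α) (h0 : ∀ k, 0 < y k ∧ α * y k ≤ 1)
    (h1 : ∀ k, 0 < y k + d k ∧ α * (y k + d k) ≤ 1) (hd : ∀ k, 0 ≤ d k) :
    MonotoneOn (psi α y d) (Set.Icc (0 : ℝ) 1) := by
  apply monotoneOn_of_deriv_nonneg (convex_Icc 0 1)
  · exact fun t _ => (hasDerivAt_psi α y d t).continuousAt.continuousWithinAt
  · exact fun t _ => (hasDerivAt_psi α y d t).differentiableAt.differentiableWithinAt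
  · intro t ht
    rw [interior_Icc] at ht
    rw [deriv_psi]
    have hb := box_interp α y d hα h0 h1 ht.1.le ht.2.le
    exact psi1_nonneg α y d hα t hb.1 hb.2 hd

noncomputable def HH (α : ℝ) (v : Fin K → ℝ) : ℝ :=
  (∑ j, v j * Real.exp (-α * v j)) / (∑ i, Real.exp (-α * v i))

lemma psi_eq (t : ℝ) : psi α y d t = HH α (fun k => y k + t * d k) := rfl

lemma psi_zero : psi α y d 0 = HH α y := by
  rw [psi_eq]
  congr 1 <;> exact funext fun k => by ring_nf

lemma psi_one : psi α y d 1 = HH α (fun k => y k + d k) := by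
  rw [psi_eq]
  congr 1 <;> exact funext fun k => by ring_nf

/-- two-point concavity of `HH` on the box -/
lemma HH_concave_two [NeZero K] (hα : 0 ≤ α) {x w : Fin K → ℝ}
    (hx : ∀ k, 0 < x k ∧ α * x k ≤ 1) (hw : ∀ k, 0 < w k ∧ α * w k ≤ 1)
    {a b : ℝ} (ha : 0 ≤ a) (hb : 0 ≤ b) (hab : a + b = 1) :
    a * HH α x + b * HH α w ≤ HH α (fun k => a * x k + b * w k) := by
  set d : Fin K → ℝ := fun k => x k - w k with hd
  have h1 : ∀ k, 0 < w k + d k ∧ α * (w k + d k) ≤ 1 := by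
    intro k
    have : w k + d k = x k := by simp [hd]
    rw [this]
    exact hx k
  have hcon := psi_concaveOn α w d hα hw h1
  have key := hcon.2 (Set.mem_Icc.2 ⟨zero_le_one, le_refl 1⟩)
    (Set.mem_Icc.2 ⟨le_refl 0, zero_le_one⟩) ha hb hab
  simp only [smul_eq_mul, mul_one, mul_zero, add_zero] at key
  have e1 : psi α w d 1 = HH α x := by
    rw [psi_one]
    congr 1
    exact funext fun k => by simp [hd]
  have e0 : psi α w d 0 = HH α w := psi_zero α w d
  have ea : psi α w d a = HH α (fun k => a * x k + b * w k) := by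
    rw [psi_eq]
    congr 1
    refine funext fun k => ?_
    have hb' : b = 1 - a := by linarith
    simp [hd, hb']
    ring
  rw [e1, e0, ea] at key
  exact key

/-- monotonicity of `HH` on the box -/
lemma HH_mono [NeZero K] (hα : 0 ≤ α) {x w : Fin K → ℝ}
    (hx : ∀ k, 0 < x k ∧ α * x k ≤ 1) (hw : ∀ k, 0 < w k ∧ α * w k ≤ 1)
    (hxw : ∀ k, x k ≤ w k) : HH α x ≤ HH α w := by
  set d : Fin K → ℝ := fun k => w k - x k with hd
  have h1 : ∀ k, 0 < x k + d k ∧ α * (x k + d k) ≤ 1 := by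
    intro k
    have : x k + d k = w k := by simp [hd]
    rw [this]
    exact hw k
  have hmono := psi_monotoneOn α x d hα hx h1 (fun k => by simp [hd]; linarith [hxw k])
  have := hmono (Set.mem_Icc.2 ⟨le_refl 0, zero_le_one⟩)
    (Set.mem_Icc.2 ⟨zero_le_one, le_refl 1⟩) zero_le_one
  rw [psi_zero, psi_one] at this
  have e1 : (fun k => x k + d k) = w := funext fun k => by simp [hd]
  rwa [e1] at this

end Stmt11Aux

open Stmt11Aux in
/-- Composition rule: if each `f_k` is concave on a convex set `C` with
`0 < f_k(z)` and `α f_k(z) ≤ 1` on `C`, then `z ↦ H_α(f_1(z), …, f_K(z))` is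
concave on `C`, where
`H_α(x) = (∑ j, x_j e^{-α x_j}) / (∑ i, e^{-α x_i})`. -/
theorem stmt_11 (K : ℕ) (hK : 1 ≤ K) (α : ℝ) (hα : 0 ≤ α)
    (m : ℕ) (C : Set (Fin m → ℝ)) (hC : Convex ℝ C)
    (f : Fin K → (Fin m → ℝ) → ℝ)
    (hconc : ∀ k, ConcaveOn ℝ C (f k))
    (hpos : ∀ k, ∀ z ∈ C, 0 < f k z)
    (hle : ∀ k, ∀ z ∈ C, α * f k z ≤ 1) :
    ConcaveOn ℝ C (fun z =>
      (∑ j, f j z * Real.exp (-α * f j z)) / (∑ i, Real.exp (-α * f i z))) := by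
  haveI : NeZero K := ⟨by omega⟩
  constructor
  · exact hC
  intro z hz w hw a b ha hb hab
  have hp : a • z + b • w ∈ C := hC hz hw ha hb hab
  have hx : ∀ k, 0 < f k z ∧ α * f k z ≤ 1 := fun k => ⟨hpos k z hz, hle k z hz⟩
  have hw' : ∀ k, 0 < f k w ∧ α * f k w ≤ 1 := fun k => ⟨hpos k w hw, hle k w hw⟩
  have hF : ∀ k, 0 < f k (a • z + b • w) ∧ α * f k (a • z + b • w) ≤ 1 :=
    fun k => ⟨hpos k _ hp, hle k _ hp⟩
  have hm : ∀ k, 0 < a * f k z + b * f k w ∧ α * (a * f k z + b * f k w) ≤ 1 := by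
    intro k
    constructor
    · nlinarith [(hx k).1, (hw' k).1, mul_nonneg ha (hx k).1.le,
        mul_nonneg hb (hw' k).1.le, mul_pos (hx k).1 (hw' k).1]
    · have a1 : a * (α * f k z) ≤ a * 1 := mul_le_mul_of_nonneg_left (hx k).2 ha
      have a2 : b * (α * f k w) ≤ b * 1 := mul_le_mul_of_nonneg_left (hw' k).2 hb
      nlinarith
  have hge : ∀ k, a * f k z + b * f k w ≤ f k (a • z + b • w) := by
    intro k
    have := (hconc k).2 hz hw ha hb hab
    simpa [smul_eq_mul] using this
  have step1 : a * HH α (fun k => f k z) + b * HH α (fun k => f k w)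
      ≤ HH α (fun k => a * f k z + b * f k w) := HH_concave_two α hα hx hw' ha hb hab
  have step2 : HH α (fun k => a * f k z + b * f k w)
      ≤ HH α (fun k => f k (a • z + b • w)) := HH_mono α hα hm hF hge
  have final := le_trans step1 step2
  simpa [HH, smul_eq_mul] using final
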